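/- Let R₀ ∈ (0,∞), let ℓ : (0,R₀) → (0,∞) satisfy ℓ(rλ) ≥ c_L λ^{-γ} ℓ(r) for 0 < r, 1 ≤ λ < R₀/r with c_L ∈ (0,1), γ ∈ (0,2), and let L(r) = ∫_r^{R₀} ℓ(s)/s ds be finite for 0 < r < R₀ with L(0+) = +∞. Then for any λ₁ > 1 there exists r₁ > 0 (depending on λ₁ and R₀) such that L(rλ)/L(r) ≥ (c_L/2) λ^{-γ} for all 1 ≤ λ < λ₁ and 0 < r < r₁. -/

import Mathlib

open MeasureTheory Set Filter

theorem stmt2 (R₀ : ℝ) (hR₀ : 0 < R₀) (ℓ : ℝ → ℝ) (cL γ : ℝ)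
    (hcL : cL ∈ Set.Ioo (0:ℝ) 1) (hγ : γ ∈ Set.Ioo (0:ℝ) 2)
    (hℓmeas : Measurable ℓ)
    (hℓpos : ∀ r, 0 < r → r < R₀ → 0 < ℓ r)
    (hscale : ∀ r > 0, ∀ lam, 1 ≤ lam → lam < R₀ / r →
      ℓ (r * lam) ≥ cL * lam ^ (-γ) * ℓ r)
    (L : ℝ → ℝ) (hL : ∀ r, 0 < r → r < R₀ → L r = ∫ s in Set.Ioo r R₀, ℓ s / s)
    (hfin : ∀ r, 0 < r → r < R₀ → IntegrableOn (fun s => ℓ s / s) (Set.Ioo r R₀))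
    (hLtop : Tendsto L (nhdsWithin 0 (Set.Ioi 0)) atTop) :
    ∀ lam₁ > (1:ℝ), ∃ r₁ > 0, ∀ lam r, 1 ≤ lam → lam < lam₁ → 0 < r → r < r₁ →
      L (r * lam) ≥ cL / 2 * lam ^ (-γ) * L r := by
  obtain ⟨hcL0, hcL1⟩ := hcL
  intro lam₁ hlam₁
  have hlam₁0 : (0:ℝ) < lam₁ := lt_trans one_pos hlam₁
  have hR₀lam₁ : 0 < R₀ / lam₁ := div_pos hR₀ hlam₁0
  have hR₀lam₁' : R₀ / lam₁ < R₀ := div_lt_self hR₀ hlam₁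
  set C := L (R₀ / lam₁) with hCdef
  have hCeq : C = ∫ s in Set.Ioo (R₀/lam₁) R₀, ℓ s / s := hL _ hR₀lam₁ hR₀lam₁'
  have hev : {r | 2*C ≤ L r} ∈ nhdsWithin (0:ℝ) (Set.Ioi 0) :=
    hLtop.eventually (eventually_ge_atTop (2*C))
  obtain ⟨u, hu, hsub⟩ := mem_nhdsGT_iff_exists_Ioo_subset.mp hev
  refine ⟨min u (R₀/lam₁), lt_min hu hR₀lam₁, ?_⟩
  intro lam r hlam1 hlamlt hr0 hrlt
  have hlam0 : (0:ℝ) < lam := lt_of_lt_of_le one_pos hlam1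
  have hru : r < u := lt_of_lt_of_le hrlt (min_le_left _ _)
  have hrR' : r < R₀/lam₁ := lt_of_lt_of_le hrlt (min_le_right _ _)
  have hrlam₁R : r * lam₁ < R₀ := (lt_div_iff₀ hlam₁0).mp hrR'
  have hrlamR : r * lam < R₀ := lt_trans
    (mul_lt_mul_of_pos_left hlamlt hr0) hrlam₁R
  have hrlam0 : 0 < r * lam := mul_pos hr0 hlam0
  have hrR₀ : r < R₀ := lt_trans hrR' hR₀lam₁'
  have hrRl : r < R₀ / lam := (lt_div_iff₀ hlam0).mpr hrlamR
  have hRlR : R₀ / lam ≤ R₀ := div_le_self hR₀.le hlam1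
  have hRl0 : 0 < R₀ / lam := div_pos hR₀ hlam0
  have hR1R : R₀ / lam₁ < R₀ / lam := div_lt_div_of_pos_left hR₀ hlam0 hlamlt
  have hpow : (0:ℝ) < lam ^ (-γ) := Real.rpow_pos_of_pos hlam0 _
  -- integrability
  have I1 : IntegrableOn (fun s => ℓ s / s) (Set.Ioo r R₀) := hfin r hr0 hrR₀
  have I2 : IntegrableOn (fun s => ℓ s / s) (Set.Ioo (r*lam) R₀) := hfin _ hrlam0 hrlamR
  have Ii2 : IntervalIntegrable (fun s => ℓ s / s) volume (r*lam) R₀ :=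
    (intervalIntegrable_iff_integrableOn_Ioo_of_le hrlamR.le).mpr I2
  have Ii3 : IntervalIntegrable (fun x => ℓ (x*lam) / (x*lam)) volume r (R₀/lam) := by
    have := Ii2.comp_mul_right (c := lam)
    rwa [mul_div_cancel_right₀ _ (ne_of_gt hlam0)] at this
  have I3 : IntegrableOn (fun x => ℓ (x*lam) / (x*lam)) (Set.Ioo r (R₀/lam)) :=
    (intervalIntegrable_iff_integrableOn_Ioo_of_le hrRl.le).mp Ii3
  have hEqOn : Set.EqOn (fun x => ℓ (x*lam) / x)
      (fun x => lam * (ℓ (x*lam) / (x*lam))) (Set.Ioo r (R₀/lam)) := by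
    intro x hx
    have hx0 : x ≠ 0 := ne_of_gt (lt_trans hr0 hx.1)
    field_simp
  have Ileft : IntegrableOn (fun x => ℓ (x*lam) / x) (Set.Ioo r (R₀/lam)) :=
    MeasureTheory.IntegrableOn.congr_fun (I3.const_mul lam) hEqOn.symm measurableSet_Ioo
  have Iright : IntegrableOn (fun x => cL * lam ^ (-γ) * (ℓ x / x))
      (Set.Ioo r (R₀/lam)) :=
    (I1.mono_set (Set.Ioo_subset_Ioo_right hRlR)).const_mul _
  -- change of variables: L (r*lam) = ∫ over Ioo r (R₀/lam) of ℓ(x lam)/x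
  have hCoV : L (r*lam) = ∫ x in Set.Ioo r (R₀/lam), ℓ (x*lam) / x := by
    have h1 : (∫ x in r..(R₀/lam), ℓ (x*lam) / (x*lam))
        = lam⁻¹ • ∫ x in (r*lam)..((R₀/lam)*lam), ℓ x / x :=
      intervalIntegral.integral_comp_mul_right (fun s => ℓ s / s) (ne_of_gt hlam0)
    rw [div_mul_cancel₀ _ (ne_of_gt hlam0)] at h1
    have h2 : (∫ x in Set.Ioo r (R₀/lam), ℓ (x*lam) / x)
        = lam * ∫ x in Set.Ioo r (R₀/lam), ℓ (x*lam) / (x*lam) := by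
      rw [← integral_const_mul]
      exact setIntegral_congr_fun measurableSet_Ioo hEqOn
    have h3 : (∫ x in r..(R₀/lam), ℓ (x*lam) / (x*lam))
        = ∫ x in Set.Ioo r (R₀/lam), ℓ (x*lam) / (x*lam) := by
      rw [intervalIntegral.integral_of_le hrRl.le, integral_Ioc_eq_integral_Ioo]
    have h4 : (∫ x in (r*lam)..R₀, ℓ x / x)
        = ∫ x in Set.Ioo (r*lam) R₀, ℓ x / x := by
      rw [intervalIntegral.integral_of_le hrlamR.le, integral_Ioc_eq_integral_Ioo]
    rw [hL _ hrlam0 hrlamR, h2, ← h3, h1, ← h4, smul_eq_mul]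
    field_simp
  -- pointwise scaling bound, integrated
  have hMono : (∫ x in Set.Ioo r (R₀/lam), cL * lam ^ (-γ) * (ℓ x / x))
      ≤ ∫ x in Set.Ioo r (R₀/lam), ℓ (x*lam) / x := by
    refine setIntegral_mono_on Iright Ileft measurableSet_Ioo ?_
    intro x hx
    have hx0 : 0 < x := lt_trans hr0 hx.1
    have hxlam : x * lam < R₀ := (lt_div_iff₀ hlam0).mp hx.2
    have hlt : lam < R₀ / x := (lt_div_iff₀ hx0).mpr (by linarith [mul_comm x lam])
    have hsc := hscale x hx0 lam hlam1 hlt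
    rw [← mul_div_assoc]
    gcongr
  -- split L r
  have Ii1a : IntervalIntegrable (fun s => ℓ s / s) volume r (R₀/lam) :=
    (intervalIntegrable_iff_integrableOn_Ioo_of_le hrRl.le).mpr
      (I1.mono_set (Set.Ioo_subset_Ioo_right hRlR))
  have Ii1b : IntervalIntegrable (fun s => ℓ s / s) volume (R₀/lam) R₀ :=
    (intervalIntegrable_iff_integrableOn_Ioo_of_le hRlR).mpr
      (I1.mono_set (Set.Ioo_subset_Ioo_left hrRl.le))
  have hsplit : (∫ x in r..(R₀/lam), ℓ x / x) + (∫ x in (R₀/lam)..R₀, ℓ x / x)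
      = ∫ x in r..R₀, ℓ x / x :=
    intervalIntegral.integral_add_adjacent_intervals Ii1a Ii1b
  have hLr : L r = (∫ x in Set.Ioo r (R₀/lam), ℓ x / x)
      + ∫ x in Set.Ioo (R₀/lam) R₀, ℓ x / x := by
    rw [hL _ hr0 hrR₀, ← integral_Ioc_eq_integral_Ioo,
      ← intervalIntegral.integral_of_le hrR₀.le, ← hsplit,
      intervalIntegral.integral_of_le hrRl.le, integral_Ioc_eq_integral_Ioo,
      intervalIntegral.integral_of_le hRlR, integral_Ioc_eq_integral_Ioo]
  -- tail bound
  set T := ∫ x in Set.Ioo (R₀/lam) R₀, ℓ x / x with hT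
  have hTC : T ≤ C := by
    rw [hCeq]
    refine setIntegral_mono_set (hfin _ hR₀lam₁ hR₀lam₁') ?_ ?_
    · refine (ae_restrict_iff' measurableSet_Ioo).mpr (ae_of_all _ fun x hx => ?_)
      exact le_of_lt (div_pos (hℓpos x (lt_trans hR₀lam₁ hx.1) hx.2)
        (lt_trans hR₀lam₁ hx.1))
    · exact HasSubset.Subset.eventuallyLE (Set.Ioo_subset_Ioo_left hR1R.le)
  have hLr2C : 2*C ≤ L r := hsub ⟨hr0, hru⟩
  -- put everything together
  have hconst : (∫ x in Set.Ioo r (R₀/lam), cL * lam ^ (-γ) * (ℓ x / x))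
      = cL * lam ^ (-γ) * ∫ x in Set.Ioo r (R₀/lam), ℓ x / x :=
    integral_const_mul _ _
  have hmain : L (r*lam) ≥ cL * lam ^ (-γ) * (L r - T) := by
    rw [hCoV]
    have : (∫ x in Set.Ioo r (R₀/lam), ℓ x / x) = L r - T := by
      rw [hLr]; ring
    calc cL * lam ^ (-γ) * (L r - T)
        = ∫ x in Set.Ioo r (R₀/lam), cL * lam ^ (-γ) * (ℓ x / x) := by
          rw [hconst, this]
      _ ≤ ∫ x in Set.Ioo r (R₀/lam), ℓ (x*lam) / x := hMono
  have hP : 0 < cL * lam ^ (-γ) := mul_pos hcL0 hpow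
  have : cL * lam ^ (-γ) * (L r - T) ≥ cL / 2 * lam ^ (-γ) * L r := by nlinarith
  linarith [hmain, this]
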